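/- In a tag scheme where every element's tag at a given tree level uses b+1 bits with the most significant bit (MSB) serving as a version flag, suppose all old labels have MSB 0 and all new labels have MSB 1, the new labels (without MSB) are order-consistent among themselves, the old labels (without MSB) are order-consistent among themselves, and the elements are relabeled from the rightmost (largest) element towards the leftmost. Then at every intermediate point of the relabeling process, for any two elements x preceding y in the list, the (b+1)-bit fields of x and y satisfy field(x) < field(y) or x and y lie under the same child (are tied), i.e., comparisons via the current tags never contradict the list order. -/
import Mathlib

/-- MSB versioning during relabeling.  A segment of `n` list elements is
being relabeled.  Old labels (`oldf`, MSB `0`, so value `oldf i < 2^b`) are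
order-consistent (nondecreasing along the list), and so are the new labels (`newf`,
MSB `1`, so field value `2^b + newf i`).  Relabeling proceeds from the rightmost element
leftwards, so at an intermediate moment the suffix of positions `≥ p` carries new labels
and the prefix carries old labels.  Then the current `(b+1)`-bit fields never contradict
the list order: for `x` preceding `y`, `field x < field y` or `field x = field y`
(a tie, when they lie under the same child), i.e. the field function is monotone, and a
strict field comparison implies the correct list order. -/
theorem relabel_msb_consistent (n b p : ℕ)
    (oldf newf : Fin n → ℕ)
    (holdlt : ∀ i, oldf i < 2^b) (hnewlt : ∀ i, newf i < 2^b)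
    (holdmono : Monotone oldf) (hnewmono : Monotone newf) :
    Monotone (fun i : Fin n => if p ≤ (i : ℕ) then 2^b + newf i else oldf i) ∧
    ∀ i j : Fin n,
      (if p ≤ (i : ℕ) then 2^b + newf i else oldf i) <
        (if p ≤ (j : ℕ) then 2^b + newf j else oldf j) → i < j := by
  have hmono : Monotone (fun i : Fin n => if p ≤ (i : ℕ) then 2^b + newf i else oldf i) := by
    intro i j hij
    simp only
    by_cases hi : p ≤ (i : ℕ)
    · have hj : p ≤ (j : ℕ) := le_trans hi hij
      simp [hi, hj]
      exact hnewmono hij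
    · by_cases hj : p ≤ (j : ℕ)
      · simp [hi, hj]
        exact le_of_lt (lt_of_lt_of_le (holdlt i) (Nat.le_add_right _ _))
      · simp [hi, hj]
        exact holdmono hij
  refine ⟨hmono, fun i j h => ?_⟩
  by_contra hn
  exact absurd (hmono (not_lt.mp hn)) (not_le.mpr h)
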